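/- Let $f: [-1/2, 1/2] \to \mathbb{C}$ be square-integrable. Extend $f$ to $[-1/2, 3/2]$ by $f(1-x) = i\overline{f(x)}$ and then to $\mathbb{R}$ by $f(x+2) = -f(x)$. Then in the Fourier series of the resulting period-4 function, $f(x) = \sum_{n \in \mathbb{Z}} c_n e^{-i n \pi x/2}$, all even coefficients vanish ($c_{2m} = 0$ for all $m \in \mathbb{Z}$) and the odd coefficients satisfy $c_{2k} + i^{2k-1}\overline{c_{2k}} = 0$ for all $k \in \mathbb{Z}+1/2$, i.e., $c_{2k} \in \mathbb{R}\cdot e^{i\pi(-k/2 - 1/4)}$. -/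

import Mathlib

open Complex Real MeasureTheory

lemma conj_intervalIntegral (f : ℝ → ℂ) (a b : ℝ) :
    (starRingEnd ℂ) (∫ x in a..b, f x) = ∫ x in a..b, (starRingEnd ℂ) (f x) := by
  simp only [intervalIntegral, map_sub, integral_conj]

/-- Symmetry constraints on the Fourier coefficients of the period-4 extension:
if `g` extends a square-integrable `f` on `[-1/2,1/2]` with the reflection
`g(1-x) = i conj(g(x))` and the antiperiodicity `g(x+2) = -g(x)`, then in the
Fourier series `g(x) = Σₙ cₙ e^{-inπx/2}` all even coefficients vanish and the
odd coefficients satisfy `c_{2k} + i^{2k-1} conj(c_{2k}) = 0`. -/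
theorem extension_fourier_coefficients (f g : ℝ → ℂ)
    (hf : MemLp f 2 (volume.restrict (Set.Icc (-(1:ℝ)/2) (1/2))))
    (hgf : ∀ x ∈ Set.Icc (-(1:ℝ)/2) (1/2), g x = f x)
    (hrefl : ∀ x : ℝ, g (1 - x) = Complex.I * (starRingEnd ℂ) (g x))
    (hanti : ∀ x : ℝ, g (x + 2) = - g x)
    (hint : IntervalIntegrable g volume (-2) 2)
    (c : ℤ → ℂ)
    (hc : ∀ n : ℤ, c n = (1/4 : ℂ) *
      ∫ x in (-2:ℝ)..2, g x * Complex.exp (Complex.I * (n : ℂ) * (Real.pi : ℂ) * (x : ℂ) / 2)) :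
    (∀ m : ℤ, c (2*m) = 0) ∧
    (∀ n : ℤ, Odd n → c n + Complex.I ^ (n - 1) * (starRingEnd ℂ) (c n) = 0) := by
  have hgper : Function.Periodic g 4 := by
    intro x
    have h2 := hanti (x + 2)
    have e : x + 2 + 2 = x + 4 := by ring
    rw [e] at h2
    rw [h2, hanti x, neg_neg]
  -- the integrand and its integrability
  set H : ℤ → ℝ → ℂ := fun n x =>
      g x * Complex.exp (Complex.I * (n : ℂ) * (Real.pi : ℂ) * (x : ℂ) / 2) with hH
  have hHcont : ∀ n : ℤ, Continuous fun x : ℝ =>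
      Complex.exp (Complex.I * (n : ℂ) * (Real.pi : ℂ) * (x : ℂ) / 2) := by
    intro n; fun_prop
  have hHint : ∀ n : ℤ, IntervalIntegrable (H n) volume (-2) 2 := fun n =>
    hint.mul_continuousOn (hHcont n).continuousOn
  have hHper : ∀ n : ℤ, Function.Periodic (H n) 4 := by
    intro n x
    simp only [hH]
    rw [hgper x]
    congr 1
    have : Complex.I * (n : ℂ) * (Real.pi : ℂ) * ((x : ℝ) + 4 : ℝ) / 2
        = Complex.I * (n : ℂ) * (Real.pi : ℂ) * (x : ℂ) / 2 + (n : ℂ) * (2 * (Real.pi : ℂ) * Complex.I) := by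
      push_cast; ring
    rw [this, Complex.exp_add, Complex.exp_int_mul_two_pi_mul_I, mul_one]
  constructor
  · -- even coefficients vanish
    intro m
    rw [hc]
    have hsplit :
        (∫ x in (-2:ℝ)..0, H (2*m) x) + ∫ x in (0:ℝ)..2, H (2*m) x
          = ∫ x in (-2:ℝ)..2, H (2*m) x :=
      intervalIntegral.integral_add_adjacent_intervals
        ((hHint (2*m)).mono_set (by rw [Set.uIcc_of_le, Set.uIcc_of_le] <;> norm_num
          <;> exact Set.Icc_subset_Icc (by norm_num) (by norm_num)))
        ((hHint (2*m)).mono_set (by rw [Set.uIcc_of_le, Set.uIcc_of_le] <;> norm_num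
          <;> exact Set.Icc_subset_Icc (by norm_num) (by norm_num)))
    have hshift : (∫ x in (-2:ℝ)..0, H (2*m) x) = - ∫ x in (0:ℝ)..2, H (2*m) x := by
      have h1 : (∫ x in (0:ℝ)..2, H (2*m) (x + (-2))) = ∫ x in (0:ℝ)+(-2)..(2:ℝ)+(-2), H (2*m) x :=
        intervalIntegral.integral_comp_add_right (H (2*m)) (-2)
      have e1 : (0:ℝ) + (-2) = -2 := by norm_num
      have e2 : (2:ℝ) + (-2) = 0 := by norm_num
      rw [e1, e2] at h1
      rw [← h1, ← intervalIntegral.integral_neg]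
      apply intervalIntegral.integral_congr
      intro x _
      simp only [hH]
      have hg' : g (x + (-2)) = - g x := by
        have := hanti (x + (-2))
        have e : x + (-2) + 2 = x := by ring
        rw [e] at this
        rw [this, neg_neg]
      rw [hg']
      have hexp : Complex.exp (Complex.I * ((2*m : ℤ) : ℂ) * (Real.pi : ℂ) * ((x + (-2) : ℝ) : ℂ) / 2)
          = Complex.exp (Complex.I * ((2*m : ℤ) : ℂ) * (Real.pi : ℂ) * (x : ℂ) / 2) := by
        have : Complex.I * ((2*m : ℤ) : ℂ) * (Real.pi : ℂ) * ((x + (-2) : ℝ) : ℂ) / 2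
            = Complex.I * ((2*m : ℤ) : ℂ) * (Real.pi : ℂ) * (x : ℂ) / 2
              + ((-m : ℤ) : ℂ) * (2 * (Real.pi : ℂ) * Complex.I) := by
          push_cast; ring
        rw [this, Complex.exp_add, Complex.exp_int_mul_two_pi_mul_I, mul_one]
      rw [hexp]; ring
    rw [← hsplit, hshift]
    ring
  · -- odd coefficient phase constraint
    intro n _
    -- key computation:  conj (c n) = -I * I^(-n) * c n
    have hconj : (starRingEnd ℂ) (c n)
        = (-Complex.I) * Complex.exp (-(Complex.I * (n : ℂ) * (Real.pi : ℂ)) / 2) * c n := by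
      rw [hc n, map_mul, conj_intervalIntegral]
      have hcongr : (fun x : ℝ => (starRingEnd ℂ) (H n x))
          = fun x : ℝ => (fun u : ℝ => (-Complex.I) *
              (g u * Complex.exp (-(Complex.I * (n : ℂ) * (Real.pi : ℂ) * ((1 - u : ℝ) : ℂ)) / 2))) (1 - x) := by
        funext x
        simp only [hH, map_mul]
        have hgconj : (starRingEnd ℂ) (g x) = (-Complex.I) * g (1 - x) := by
          rw [hrefl x]; ring_nf; rw [Complex.I_sq]; ring
        rw [hgconj, ← Complex.exp_conj]
        have : (starRingEnd ℂ) (Complex.I * (n : ℂ) * (Real.pi : ℂ) * (x : ℂ) / 2)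
            = -(Complex.I * (n : ℂ) * (Real.pi : ℂ) * (x : ℂ)) / 2 := by
          simp [map_div₀, Complex.conj_I, map_ofNat]
        rw [this]
        have e : ((1 - (1 - x) : ℝ) : ℂ) = (x : ℂ) := by push_cast; ring
        simp only [sub_sub_cancel]
        push_cast
        ring_nf
      rw [hcongr]
      rw [intervalIntegral.integral_comp_sub_left
        (fun u : ℝ => (-Complex.I) *
          (g u * Complex.exp (-(Complex.I * (n : ℂ) * (Real.pi : ℂ) * ((1 - u : ℝ) : ℂ)) / 2))) 1]
      have e1 : (1:ℝ) - 2 = -1 := by norm_num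
      have e2 : (1:ℝ) - (-2) = 3 := by norm_num
      rw [e1, e2]
      have hfac : (fun u : ℝ => (-Complex.I) *
          (g u * Complex.exp (-(Complex.I * (n : ℂ) * (Real.pi : ℂ) * ((1 - u : ℝ) : ℂ)) / 2)))
          = fun u : ℝ => ((-Complex.I) * Complex.exp (-(Complex.I * (n : ℂ) * (Real.pi : ℂ)) / 2)) * H n u := by
        funext u
        simp only [hH]
        have : -(Complex.I * (n : ℂ) * (Real.pi : ℂ) * ((1 - u : ℝ) : ℂ)) / 2
            = -(Complex.I * (n : ℂ) * (Real.pi : ℂ)) / 2 + Complex.I * (n : ℂ) * (Real.pi : ℂ) * (u : ℂ) / 2 := by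
          push_cast; ring
        rw [this, Complex.exp_add]
        ring
      rw [hfac, intervalIntegral.integral_const_mul]
      have hper4 : (∫ u in (-1:ℝ)..3, H n u) = ∫ u in (-2:ℝ)..2, H n u := by
        have := (hHper n).intervalIntegral_add_eq (-1) (-2)
        have e3 : (-1:ℝ) + 4 = 3 := by norm_num
        have e4 : (-2:ℝ) + 4 = 2 := by norm_num
        rwa [e3, e4] at this
      rw [hper4]
      have : (starRingEnd ℂ) (1/4 : ℂ) = (1/4 : ℂ) := by rw [map_div₀, map_one, map_ofNat]
      rw [this]
      ring
    -- now the algebra with powers of I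
    have hexpI : Complex.exp (-(Complex.I * (n : ℂ) * (Real.pi : ℂ)) / 2) = Complex.I ^ (-n) := by
      have e : -(Complex.I * (n : ℂ) * (Real.pi : ℂ)) / 2
          = ((-n : ℤ) : ℂ) * ((Real.pi : ℂ) / 2 * Complex.I) := by push_cast; ring
      rw [e, Complex.exp_int_mul]
      congr 1
      rw [Complex.exp_mul_I]
      have hc' : Complex.cos ((Real.pi : ℂ)/2) = 0 := by
        rw [show ((Real.pi : ℂ)/2) = ((Real.pi/2 : ℝ) : ℂ) by push_cast; ring,
          ← Complex.ofReal_cos, Real.cos_pi_div_two, Complex.ofReal_zero]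
      have hs' : Complex.sin ((Real.pi : ℂ)/2) = 1 := by
        rw [show ((Real.pi : ℂ)/2) = ((Real.pi/2 : ℝ) : ℂ) by push_cast; ring,
          ← Complex.ofReal_sin, Real.sin_pi_div_two, Complex.ofReal_one]
      rw [hc', hs', one_mul, zero_add]
    rw [hconj, hexpI]
    have hkey : Complex.I ^ (n - 1) * ((-Complex.I) * Complex.I ^ (-n)) = -1 := by
      have h1 : Complex.I ^ (n - 1) * Complex.I ^ (-n) = Complex.I ^ (-1 : ℤ) := by
        rw [← zpow_add₀ Complex.I_ne_zero]
        congr 1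
        ring
      calc Complex.I ^ (n - 1) * ((-Complex.I) * Complex.I ^ (-n))
          = (Complex.I ^ (n - 1) * Complex.I ^ (-n)) * (-Complex.I) := by ring
        _ = Complex.I ^ (-1 : ℤ) * (-Complex.I) := by rw [h1]
        _ = -1 := by rw [zpow_neg_one, Complex.inv_I]; simp [Complex.I_mul_I]
    calc c n + Complex.I ^ (n - 1) * ((-Complex.I) * Complex.I ^ (-n) * c n)
        = c n + (Complex.I ^ (n - 1) * ((-Complex.I) * Complex.I ^ (-n))) * c n := by ring
      _ = c n + (-1) * c n := by rw [hkey]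
      _ = 0 := by ring
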